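/- Let r and m be positive integers with r ≤ m. The set of matrices A ∈ Matrix (Fin r) (Fin m) ℝ such that the associated linear map ℝ^m → ℝ^r, v ↦ A.mulVec v, is not surjective, is a null set for the Lebesgue measure (the canonical additive Haar / volume measure) on the finite-dimensional real vector space Matrix (Fin r) (Fin m) ℝ. -/

import Mathlib

open MeasureTheory

/-- The Lebesgue (volume) measure on the space of real `r × m` matrices, obtained from the
product measure on `Fin r → Fin m → ℝ` (of which `Matrix (Fin r) (Fin m) ℝ` is a copy). -/
noncomputable instance matrixMeasureSpace (r m : ℕ) :
    MeasureSpace (Matrix (Fin r) (Fin m) ℝ) :=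
  inferInstanceAs (MeasureSpace (Fin r → Fin m → ℝ))

/-- For `r ≤ m`, almost every `r`-tuple of vectors in `ℝ^m` is linearly independent. -/
lemma stochasticGBC.aux_indep (m : ℕ) :
    ∀ r : ℕ, r ≤ m →
      volume {v : Fin r → (Fin m → ℝ) | ¬ LinearIndependent ℝ v} = 0 := by
  intro r
  induction r with
  | zero =>
    intro _
    have : {v : Fin 0 → (Fin m → ℝ) | ¬ LinearIndependent ℝ v} = ∅ := by
      ext v
      simp [linearIndependent_empty_type]
    simp [this]
  | succ n ih =>
    intro h
    set E := Fin m → ℝ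
    have hB : IsClosed {v : Fin (n + 1) → E | ¬ LinearIndependent ℝ v} :=
      isClosed_compl_iff.mpr isOpen_setOf_linearIndependent
    -- the "bad" set in the product form
    set T : Set ((Fin n → E) × E) := {p | ¬ LinearIndependent ℝ (Fin.cons p.2 p.1)} with hT
    have hTmeas : MeasurableSet T := by
      have hc : Continuous fun p : (Fin n → E) × E => (Fin.cons p.2 p.1 : Fin (n + 1) → E) := by
        apply continuous_pi
        intro i
        refine Fin.cases ?_ ?_ i
        · simpa using continuous_snd
        · intro j
          simpa [Function.comp_def] using (continuous_apply j).comp continuous_fst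
      exact hB.measurableSet.preimage hc.measurable
    -- measure preserving equivalences
    have e0 := volume_preserving_piFinSuccAbove (fun _ : Fin (n + 1) => E) 0
    have hswap := (Measure.measurePreserving_swap
      (μ := (volume : Measure E)) (ν := (volume : Measure (Fin n → E))))
    -- express the bad set as a preimage
    have hpre : (MeasurableEquiv.piFinSuccAbove (fun _ : Fin (n + 1) => E) 0) ⁻¹'
        (Prod.swap ⁻¹' T) = {v : Fin (n + 1) → E | ¬ LinearIndependent ℝ v} := by
      ext v
      have hv : Fin.cons (v 0) (fun j : Fin n => v ((0 : Fin (n + 1)).succAbove j)) = v := by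
        ext i
        refine Fin.cases ?_ ?_ i
        · simp
        · intro j
          simp [Fin.succAbove]
      simp only [Set.mem_preimage, MeasurableEquiv.piFinSuccAbove, hT, Set.mem_setOf_eq,
        Prod.swap]
      constructor
      · intro hv'
        simpa [hv] using hv'
      · intro hv'
        simpa [hv] using hv'
    have key : (volume : Measure ((Fin n → E) × E)) T = 0 := by
      rw [Measure.volume_eq_prod, Measure.measure_prod_null hTmeas]
      filter_upwards [(ae_iff (p := fun g : Fin n → E => LinearIndependent ℝ g)).mpr
        (ih (Nat.le_of_succ_le h))] with g hgi
      show volume (Prod.mk g ⁻¹' T) = 0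
      have hslice : {x : E | (g, x) ∈ T} = (Submodule.span ℝ (Set.range g) : Set E) := by
        ext x
        simp only [hT, Set.mem_setOf_eq, SetLike.mem_coe]
        rw [linearIndependent_fin_cons]
        tauto
      have hne : Submodule.span ℝ (Set.range g) ≠ ⊤ := by
        intro htop
        have h1 : Module.finrank ℝ (Submodule.span ℝ (Set.range g)) ≤ n :=
          finrank_range_le_card g |>.trans (by simp)
        have h2 : Module.finrank ℝ E = m := by
          simp [E]
        rw [htop, finrank_top, h2] at h1
        omega
      calc volume {x : E | (g, x) ∈ T}
          = volume (Submodule.span ℝ (Set.range g) : Set E) := by rw [hslice]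
        _ = 0 := Measure.addHaar_submodule _ _ hne
    calc volume {v : Fin (n + 1) → E | ¬ LinearIndependent ℝ v}
        = volume ((MeasurableEquiv.piFinSuccAbove (fun _ : Fin (n + 1) => E) 0) ⁻¹'
            (Prod.swap ⁻¹' T)) := by rw [hpre]
      _ = (volume.prod volume) (Prod.swap ⁻¹' T) :=
          e0.measure_preimage ((hTmeas.preimage measurable_swap).nullMeasurableSet)
      _ = (volume : Measure ((Fin n → E) × E)) T :=
          hswap.measure_preimage hTmeas.nullMeasurableSet
      _ = 0 := key

/-- If the rows of `A` are linearly independent, then `A.mulVec` is surjective. -/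
lemma stochasticGBC.surjective_of_rows_indep {r m : ℕ}
    {A : Matrix (Fin r) (Fin m) ℝ} (hA : LinearIndependent ℝ A) :
    Function.Surjective A.mulVec := by
  have hrank : A.rank = r := by simpa using hA.rank_matrix
  have : LinearMap.range A.mulVecLin = ⊤ := by
    apply Submodule.eq_top_of_finrank_eq
    have : Module.finrank ℝ (LinearMap.range A.mulVecLin) = A.rank := rfl
    rw [this, hrank]
    simp
  intro y
  obtain ⟨x, hx⟩ := LinearMap.range_eq_top.mp this y
  exact ⟨x, hx⟩

/-- For `0 < r ≤ m`, the set of real `r × m` matrices `A` whose associated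
linear map `v ↦ A.mulVec v : ℝ^m → ℝ^r` is not surjective is Lebesgue-null. -/
theorem stochasticGBC.nonsurjective_matrices_null
    (r m : ℕ) (hr : 0 < r) (hm : 0 < m) (hrm : r ≤ m) :
    volume {A : Matrix (Fin r) (Fin m) ℝ | ¬ Function.Surjective A.mulVec} = 0 := by
  have hsub : {A : Matrix (Fin r) (Fin m) ℝ | ¬ Function.Surjective A.mulVec} ⊆
      {v : Fin r → (Fin m → ℝ) | ¬ LinearIndependent ℝ v} := by
    intro A hA
    simp only [Set.mem_setOf_eq] at hA ⊢
    intro hindep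
    exact hA (stochasticGBC.surjective_of_rows_indep hindep)
  exact measure_mono_null hsub (stochasticGBC.aux_indep m r hrm)
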